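/- Let N ≥ 2 be an integer and Γ⁰(N) = {γ ∈ SL₂(ℤ) : N divides the upper-right entry of γ}. For each integer k with 1 < k < N and gcd(k, N) > 1, let μ(k) be the least positive integer m such that gcd(m·k − 1, N) = 1. Then the following matrices form a complete set of representatives of the right cosets Γ⁰(N)\SL₂(ℤ), i.e., every M ∈ SL₂(ℤ) lies in Γ⁰(N)·R for exactly one matrix R in the list: T^ν = [[1, ν], [0, 1]] for 0 ≤ ν < N; S = [[0, −1], [1, 0]]; and M_{k,k'} = [[k, k·k' − 1], [1, k']] for each integer k with 1 < k < N and gcd(k, N) > 1 and each integer k' with 0 ≤ k' < μ(k). -/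

import Mathlib

/-- `μ(k)`: the least positive integer `m` such that `gcd(m·k − 1, N) = 1`. -/
noncomputable def mu (N k : ℤ) : ℕ :=
  sInf {m : ℕ | 0 < m ∧ Int.gcd ((m : ℤ) * k - 1) N = 1}

/-- The translation matrix `T^ν = [[1, ν], [0, 1]]`. -/
def Tmat (ν : ℤ) : Matrix.SpecialLinearGroup (Fin 2) ℤ :=
  ⟨!![1, ν; 0, 1], by simp [Matrix.det_fin_two_of]⟩

/-- The inversion matrix `S = [[0, −1], [1, 0]]`. -/
def Smat : Matrix.SpecialLinearGroup (Fin 2) ℤ :=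
  ⟨!![0, -1; 1, 0], by simp [Matrix.det_fin_two_of]⟩

/-- The matrix `M_{k,k'} = [[k, k·k' − 1], [1, k']]`. -/
def Mmat (k k' : ℤ) : Matrix.SpecialLinearGroup (Fin 2) ℤ :=
  ⟨!![k, k * k' - 1; 1, k'], by rw [Matrix.det_fin_two_of]; ring⟩

/-- Oesterlé's list of representatives of `Γ⁰(N)\SL₂(ℤ)`. -/
noncomputable def reps (N : ℤ) : Set (Matrix.SpecialLinearGroup (Fin 2) ℤ) :=
  {R | (∃ ν : ℤ, 0 ≤ ν ∧ ν < N ∧ R = Tmat ν) ∨ R = Smat ∨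
    (∃ k k' : ℤ, 1 < k ∧ k < N ∧ 1 < Int.gcd k N ∧ 0 ≤ k' ∧ k' < (mu N k : ℤ) ∧
      R = Mmat k k')}

section OesterleAux


-- L2
lemma gcd_dvd_of_dvd_sub {N x y : ℤ} (h : N ∣ x - y) : (Int.gcd x N : ℤ) ∣ Int.gcd y N := by
  have h1 : (Int.gcd x N : ℤ) ∣ x := (Int.gcd_dvd_left _ _)
  have h2 : (Int.gcd x N : ℤ) ∣ N := (Int.gcd_dvd_right _ _)
  refine Int.dvd_coe_gcd ?_ h2
  have h3 : (Int.gcd x N : ℤ) ∣ x - y := h2.trans h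
  have : y = x - (x - y) := by ring
  rw [this]; exact dvd_sub h1 h3

lemma gcd_congr {N x y : ℤ} (h : N ∣ x - y) : Int.gcd x N = Int.gcd y N := by
  apply Nat.dvd_antisymm
  · exact_mod_cast gcd_dvd_of_dvd_sub h
  · refine Int.natCast_dvd_natCast.mp (gcd_dvd_of_dvd_sub ?_)
    simpa [neg_sub] using h.neg_right

-- L1
lemma gcd_unit_mul {N u v : ℤ} (x : ℤ) (h : N ∣ u * v - 1) : Int.gcd (u * x) N = Int.gcd x N := by
  apply Nat.dvd_antisymm
  · rw [← Int.natCast_dvd_natCast]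
    refine Int.dvd_coe_gcd ?_ (Int.gcd_dvd_right _ _)
    have h1 : (Int.gcd (u*x) N : ℤ) ∣ u * x := (Int.gcd_dvd_left _ _)
    have h2 : (Int.gcd (u*x) N : ℤ) ∣ N := (Int.gcd_dvd_right _ _)
    have h3 : (Int.gcd (u*x) N : ℤ) ∣ x * (u*v - 1) := (h2.trans h).mul_left x
    have h4 : (Int.gcd (u*x) N : ℤ) ∣ (u*x) * v := h1.mul_right v
    have h5 := dvd_sub h4 h3
    have he : (u*x)*v - x*(u*v-1) = x := by ring
    rwa [he] at h5
  · rw [← Int.natCast_dvd_natCast]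
    exact Int.dvd_coe_gcd (Dvd.dvd.mul_left (Int.gcd_dvd_left _ _) u) (Int.gcd_dvd_right _ _)

lemma dvd_bounded {N x : ℤ} (h : N ∣ x) (h1 : -N < x) (h2 : x < N) : x = 0 :=
  Int.eq_zero_of_abs_lt_dvd h (abs_lt.mpr ⟨h1, h2⟩)

-- relative unit lemma
lemma rel_unit {N x y x' y' c d c' d' : ℤ} (h : x*d - y*c = 1) (h' : x'*d' - y'*c' = 1)
    (hN : N ∣ x'*y - x*y') :
    ∃ U V : ℤ, N ∣ U*V - 1 ∧ N ∣ x' - U*x ∧ N ∣ y' - U*y := by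
  obtain ⟨t, ht⟩ := hN
  refine ⟨x'*d - y'*c, x*d' - y*c', ⟨(c*d' - c'*d)*t, ?_⟩, ⟨-c*t, ?_⟩, ⟨-d*t, ?_⟩⟩
  · linear_combination (c*d' - c'*d)*ht + (x'*d' - y'*c')*h + h'
  · linear_combination (-c)*ht + (-x')*h
  · linear_combination (-d)*ht + (-y')*h

lemma lift_unit {N g c : ℤ} (hN : 0 < N) (hg : 0 < g) (hdvd : g ∣ N) (hc : IsCoprime g c) :
    ∃ u v : ℤ, N ∣ u * v - 1 ∧ g ∣ u - c := by
  set n : ℕ := N.toNat with hn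
  set m : ℕ := g.toNat with hm
  have hNn : (n : ℤ) = N := Int.toNat_of_nonneg hN.le
  have hgm : (m : ℤ) = g := Int.toNat_of_nonneg hg.le
  haveI : NeZero n := ⟨by omega⟩
  haveI : NeZero m := ⟨by omega⟩
  have hmn : m ∣ n := by
    rw [← Int.natCast_dvd_natCast]; rw [hNn, hgm]; exact hdvd
  -- c is a unit in ZMod m
  obtain ⟨x, y, hxy⟩ := hc
  have hcy : (c : ZMod m) * (y : ZMod m) = 1 := by
    have : ((x * g + y * c : ℤ) : ZMod m) = ((1 : ℤ) : ZMod m) := by rw [hxy]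
    push_cast at this
    have hg0 : ((g : ℤ) : ZMod m) = 0 := by
      rw [← hgm]; push_cast; exact ZMod.natCast_self m
    rw [hg0] at this
    rw [mul_comm] at this ⊢
    simpa using this
  have hcu : IsUnit ((c : ℤ) : ZMod m) := IsUnit.of_mul_eq_one _ hcy
  obtain ⟨U, hU⟩ := ZMod.unitsMap_surjective hmn hcu.unit
  refine ⟨((U : ZMod n).val : ℤ), (((U⁻¹ : (ZMod n)ˣ) : ZMod n).val : ℤ), ?_, ?_⟩
  · rw [← hNn, ← ZMod.intCast_zmod_eq_zero_iff_dvd]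
    push_cast
    rw [ZMod.natCast_val, ZMod.natCast_val, ZMod.cast_id, ZMod.cast_id]
    rw [U.mul_inv]
    ring
  · rw [← hgm, ← ZMod.intCast_zmod_eq_zero_iff_dvd]
    push_cast
    rw [ZMod.natCast_val]
    have : (ZMod.cast ((U : ZMod n)) : ZMod m) = (c : ZMod m) := by
      have := congrArg (fun z => ((z : (ZMod m)ˣ) : ZMod m)) hU
      simpa [ZMod.unitsMap_def, IsUnit.unit_spec] using this
    rw [this]; ring
lemma unit_gcd_one {N u v : ℤ} (h : N ∣ u * v - 1) : Int.gcd u N = 1 := by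
  have h1 : (Int.gcd u N : ℤ) ∣ u := (Int.gcd_dvd_left _ _)
  have h2 : (Int.gcd u N : ℤ) ∣ N := (Int.gcd_dvd_right _ _)
  have h3 : (Int.gcd u N : ℤ) ∣ 1 := by
    have : (1 : ℤ) = u * v - (u * v - 1) := by ring
    rw [this]; exact dvd_sub (h1.mul_right v) (h2.trans h)
  have := Int.le_of_dvd one_pos h3
  have h0 : 0 < Int.gcd u N := by
    rcases Nat.eq_zero_or_pos (Int.gcd u N) with h' | h'
    · rw [h'] at h3; norm_num at h3
    · exact h'
  omega

lemma mu_spec {N : ℤ} (k : ℤ) (hN : 0 < N) :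
    0 < mu N k ∧ Int.gcd ((mu N k : ℤ) * k - 1) N = 1 := by
  have hg0 : 0 < Int.gcd k N := Int.gcd_pos_iff.mpr (Or.inr (by omega))
  obtain ⟨u, v, huv, hu1⟩ := lift_unit (c := -1) hN (by exact_mod_cast hg0)
    (Int.gcd_dvd_right _ _) ⟨0, -1, by ring⟩
  obtain ⟨e, he⟩ : (Int.gcd k N : ℤ) ∣ u + 1 := by simpa using hu1
  have hbez := Int.gcd_eq_gcd_ab k N
  set A := Int.gcdA k N
  set B := Int.gcdB k N
  set m₀ : ℤ := A * e with hm₀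
  have hkm : N ∣ m₀ * k - (u + 1) := ⟨-B * e, by rw [hm₀, he]; linear_combination (-e) * hbez⟩
  set mz : ℤ := m₀ % N + N with hmz
  have hmod : N ∣ mz - m₀ := by
    have := Int.emod_emod_of_dvd m₀ (dvd_refl N)
    have h4 : m₀ % N = m₀ - N * (m₀ / N) := Int.emod_def m₀ N
    exact ⟨-(m₀ / N) + 1, by rw [hmz, h4]; ring⟩
  have hmzpos : 0 < mz := by
    have := Int.emod_nonneg m₀ (by omega : N ≠ 0)
    omega
  have hgcd : Int.gcd (mz * k - 1) N = 1 := by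
    have e1 : Int.gcd (mz * k - 1) N = Int.gcd (m₀ * k - 1) N :=
      gcd_congr ⟨(mz - m₀)/N * k, by
        obtain ⟨t, ht⟩ := hmod
        rw [ht]; rw [Int.mul_ediv_cancel_left _ (by omega : N ≠ 0)]; linear_combination k * ht⟩
    have e2 : Int.gcd (m₀ * k - 1) N = Int.gcd u N := gcd_congr (by
      have : m₀ * k - 1 - u = m₀ * k - (u + 1) := by ring
      rw [this]; exact hkm)
    rw [e1, e2]; exact unit_gcd_one huv
  have hmem : mz.toNat ∈ {m : ℕ | 0 < m ∧ Int.gcd ((m : ℤ) * k - 1) N = 1} := by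
    constructor
    · omega
    · rw [Int.toNat_of_nonneg hmzpos.le]; exact hgcd
  have hne : {m : ℕ | 0 < m ∧ Int.gcd ((m : ℤ) * k - 1) N = 1}.Nonempty := ⟨mz.toNat, hmem⟩
  have := Nat.sInf_mem hne
  exact this

lemma mu_le {N k : ℤ} {m : ℕ} (hm : 0 < m) (h : Int.gcd ((m : ℤ) * k - 1) N = 1) :
    mu N k ≤ m := Nat.sInf_le ⟨hm, h⟩

lemma mem_coset_iff (N : ℤ) (M R : Matrix.SpecialLinearGroup (Fin 2) ℤ) :
    (∃ γ : Matrix.SpecialLinearGroup (Fin 2) ℤ, N ∣ γ.1 0 1 ∧ M = γ * R) ↔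
      N ∣ (M.1 0 0 * R.1 0 1 - M.1 0 1 * R.1 0 0) := by
  have hdetR : R.1 0 0 * R.1 1 1 - R.1 0 1 * R.1 1 0 = 1 := by
    have := R.2; rwa [Matrix.det_fin_two] at this
  constructor
  · rintro ⟨γ, hd, rfl⟩
    have h00 : ((γ * R).1) 0 0 = γ.1 0 0 * R.1 0 0 + γ.1 0 1 * R.1 1 0 := by
      rw [Matrix.SpecialLinearGroup.coe_mul, Matrix.mul_apply, Fin.sum_univ_two]
    have h01 : ((γ * R).1) 0 1 = γ.1 0 0 * R.1 0 1 + γ.1 0 1 * R.1 1 1 := by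
      rw [Matrix.SpecialLinearGroup.coe_mul, Matrix.mul_apply, Fin.sum_univ_two]
    obtain ⟨t, ht⟩ := hd
    refine ⟨-t, ?_⟩
    rw [h00, h01]
    linear_combination (-1 : ℤ) * ht - γ.1 0 1 * hdetR
  · intro h
    refine ⟨M * R⁻¹, ?_, by group⟩
    have hinv : (R⁻¹).1 = R.1.adjugate := Matrix.SpecialLinearGroup.coe_inv R
    have h01 : ((M * R⁻¹).1) 0 1 = M.1 0 0 * (R⁻¹).1 0 1 + M.1 0 1 * (R⁻¹).1 1 1 := by
      rw [Matrix.SpecialLinearGroup.coe_mul, Matrix.mul_apply, Fin.sum_univ_two]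
    have hadj : (R⁻¹).1 0 1 = -R.1 0 1 ∧ (R⁻¹).1 1 1 = R.1 0 0 := by
      rw [hinv]
      have : R.1.adjugate = !![R.1 1 1, -R.1 0 1; -R.1 1 0, R.1 0 0] := by
        rw [← Matrix.adjugate_fin_two]
      rw [this]; constructor <;> simp
    rw [h01, hadj.1, hadj.2]
    obtain ⟨t, ht⟩ := h
    exact ⟨-t, by linear_combination -ht⟩

lemma MM_unique {N a b cc dd k K l L : ℤ} (hN : 0 < N)
    (hdet : a * dd - b * cc = 1)
    (hk1 : 1 < k) (hkN : k < N) (hl1 : 1 < l) (hlN : l < N)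
    (hK0 : 0 ≤ K) (hKw : K < (mu N k : ℤ)) (hL0 : 0 ≤ L) (hLw : L < (mu N l : ℤ))
    (ck : N ∣ a * (k * K - 1) - b * k) (cl : N ∣ a * (l * L - 1) - b * l) :
    l = k ∧ L = K := by
  -- cross divisibility between the two representatives
  have hcross : N ∣ l * (k * K - 1) - k * (l * L - 1) := by
    have ha : N ∣ a * (l * (k * K - 1) - k * (l * L - 1)) := by
      have h1 := dvd_sub (ck.mul_left l) (cl.mul_left k)
      have he : l * (a * (k * K - 1) - b * k) - k * (a * (l * L - 1) - b * l)
          = a * (l * (k * K - 1) - k * (l * L - 1)) := by ring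
      rwa [he] at h1
    have hb : N ∣ b * (l * (k * K - 1) - k * (l * L - 1)) := by
      have h1 := dvd_sub (ck.mul_left (l*L-1)) (cl.mul_left (k*K-1))
      have he : (l*L-1) * (a * (k * K - 1) - b * k) - (k*K-1) * (a * (l * L - 1) - b * l)
          = b * (l * (k * K - 1) - k * (l * L - 1)) := by ring
      rwa [he] at h1
    have h2 := dvd_sub (ha.mul_left dd) (hb.mul_left cc)
    have he : dd * (a * (l * (k * K - 1) - k * (l * L - 1)))
        - cc * (b * (l * (k * K - 1) - k * (l * L - 1)))
        = (a * dd - b * cc) * (l * (k * K - 1) - k * (l * L - 1)) := by ring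
    rw [he, hdet, one_mul] at h2
    exact h2
  obtain ⟨U, V, hUV, hU1, hU2⟩ :=
    rel_unit (c := 1) (d := K) (c' := 1) (d' := L)
      (by ring : k * K - (k*K-1) * 1 = 1) (by ring : l * L - (l*L-1) * 1 = 1) hcross
  -- star relation
  have star : ∀ s : ℤ, Int.gcd (l*(L-s) - 1) N = Int.gcd (k*(K-s) - 1) N := by
    intro s
    have hd : N ∣ (l*(L-s) - 1) - U * (k*(K-s) - 1) := by
      have h1 := dvd_sub hU2 (hU1.mul_left s)
      have he : (l*L-1 - U*(k*K-1)) - s * (l - U*k)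
          = (l*(L-s) - 1) - U * (k*(K-s) - 1) := by ring
      rwa [he] at h1
    calc Int.gcd (l*(L-s) - 1) N = Int.gcd (U * (k*(K-s) - 1)) N := gcd_congr hd
      _ = Int.gcd (k*(K-s) - 1) N := gcd_unit_mul _ hUV
  have hKL : L = K := by
    rcases lt_trichotomy L K with h | h | h
    · exfalso
      have h1 := star L
      have he : l*(L-L) - 1 = -1 := by ring
      rw [he] at h1
      have h2 : Int.gcd (k*(K-L) - 1) N = 1 := by
        rw [← h1]; simp [Int.gcd]
      set m : ℕ := (K - L).toNat with hm
      have hmz : (m : ℤ) = K - L := Int.toNat_of_nonneg (by omega)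
      have h3 : Int.gcd ((m:ℤ) * k - 1) N = 1 := by
        rw [show (m:ℤ) * k - 1 = k*(K-L) - 1 by rw [hmz]; ring]; exact h2
      have h4 := mu_le (by omega : 0 < m) h3
      have h5 : ((mu N k : ℕ) : ℤ) ≤ (m : ℤ) := by exact_mod_cast h4
      omega
    · exact h
    · exfalso
      have h1 := star K
      have he : k*(K-K) - 1 = -1 := by ring
      rw [he] at h1
      have h2 : Int.gcd (l*(L-K) - 1) N = 1 := by
        rw [h1]; simp [Int.gcd]
      set m : ℕ := (L - K).toNat with hm
      have hmz : (m : ℤ) = L - K := Int.toNat_of_nonneg (by omega)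
      have h3 : Int.gcd ((m:ℤ) * l - 1) N = 1 := by
        rw [show (m:ℤ) * l - 1 = l*(L-K) - 1 by rw [hmz]; ring]; exact h2
      have h4 := mu_le (by omega : 0 < m) h3
      have h5 : ((mu N l : ℕ) : ℤ) ≤ (m : ℤ) := by exact_mod_cast h4
      omega
  subst hKL
  have hUone : N ∣ U - 1 := by
    have h1 := dvd_sub hU2 (hU1.mul_left L)
    have he : (l*L-1 - U*(k*L-1)) - L * (l - U*k) = U - 1 := by ring
    rwa [he] at h1
  have hlk : N ∣ l - k := by
    have h1 := dvd_add hU1 (hUone.mul_right k)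
    have he : (l - U*k) + (U - 1)*k = l - k := by ring
    rwa [he] at h1
  have := dvd_bounded hlk (by omega) (by omega)
  exact ⟨by omega, rfl⟩

end OesterleAux

/-- Oesterlé's proposition: every `M ∈ SL₂(ℤ)` lies in `Γ⁰(N)·R` for exactly one
matrix `R` in the list of representatives, where
`Γ⁰(N) = {γ ∈ SL₂(ℤ) : N ∣ (upper-right entry of γ)}`. -/

theorem gammaUpper0_coset_reps (N : ℤ) (hN : 2 ≤ N)
    (M : Matrix.SpecialLinearGroup (Fin 2) ℤ) :
    ∃! R : Matrix.SpecialLinearGroup (Fin 2) ℤ, R ∈ reps N ∧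
      ∃ γ : Matrix.SpecialLinearGroup (Fin 2) ℤ, N ∣ γ.1 0 1 ∧ M = γ * R := by
  have hN0 : 0 < N := by omega
  have hNne : N ≠ 0 := by omega
  set a := M.1 0 0 with ha
  set b := M.1 0 1 with hb
  set c := M.1 1 0 with hc
  set d := M.1 1 1 with hd
  have hdet : a * d - b * c = 1 := by
    have := M.2; rwa [Matrix.det_fin_two] at this
  have eT : ∀ ν : ℤ, a * (Tmat ν).1 0 1 - b * (Tmat ν).1 0 0 = a * ν - b := by
    intro ν; simp [Tmat]
  have eS : a * Smat.1 0 1 - b * Smat.1 0 0 = -a := by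
    simp [Smat]
  have eM : ∀ k k' : ℤ, a * (Mmat k k').1 0 1 - b * (Mmat k k').1 0 0
      = a * (k * k' - 1) - b * k := by
    intro k k'; simp [Mmat]
  by_cases hNa : N ∣ a
  · -- Case S
    refine ⟨Smat, ⟨Or.inr (Or.inl rfl), (mem_coset_iff N M Smat).mpr ?_⟩, ?_⟩
    · rw [eS]; exact hNa.neg_right
    · rintro R' ⟨hmem', hcos'⟩
      have hcond' := (mem_coset_iff N M R').mp hcos'
      rcases hmem' with ⟨ν', _, _, rfl⟩ | rfl | ⟨l, L, hl1, hlN, hgl, hL0, hLw, rfl⟩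
      · exfalso
        rw [eT] at hcond'
        have hNb : N ∣ b := by
          have h1 := dvd_sub (hNa.mul_right ν') hcond'
          have he : a * ν' - (a * ν' - b) = b := by ring
          rwa [he] at h1
        have h1 : N ∣ (1:ℤ) := by
          rw [← hdet]; exact dvd_sub (hNa.mul_right d) (hNb.mul_right c)
        have := Int.le_of_dvd one_pos h1
        omega
      · rfl
      · exfalso
        rw [eM] at hcond'
        have hNbl : N ∣ b * l := by
          have h1 := dvd_sub (hNa.mul_right (l*L-1)) hcond'
          have he : a * (l*L-1) - (a * (l * L - 1) - b * l) = b * l := by ring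
          rwa [he] at h1
        obtain ⟨t, ht⟩ := hNa
        have hcop : IsCoprime N b := ⟨t * d, -c, by linear_combination hdet - d * ht⟩
        have hNl : N ∣ l := hcop.dvd_of_dvd_mul_left hNbl
        have := Int.le_of_dvd (by omega) hNl
        omega
  · by_cases hg1 : Int.gcd a N = 1
    · -- Case T
      have hcop : IsCoprime a N := Int.isCoprime_iff_gcd_eq_one.mpr hg1
      obtain ⟨x, y, hxy⟩ := hcop
      set ν : ℤ := (x * b) % N with hν
      have hν0 : 0 ≤ ν := Int.emod_nonneg _ hNne
      have hνN : ν < N := Int.emod_lt_of_pos _ hN0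
      have hνd : N ∣ ν - x * b := ⟨-((x*b) / N), by rw [hν, Int.emod_def]; ring⟩
      have hcond : N ∣ a * ν - b := by
        have h1 := dvd_add (hνd.mul_left a) (⟨-b*y, by linear_combination b*hxy⟩ :
          N ∣ a * (x*b) - b)
        have he : a * (ν - x * b) + (a * (x*b) - b) = a * ν - b := by ring
        rwa [he] at h1
      refine ⟨Tmat ν, ⟨Or.inl ⟨ν, hν0, hνN, rfl⟩, (mem_coset_iff N M _).mpr ?_⟩, ?_⟩
      · rw [eT]; exact hcond
      · rintro R' ⟨hmem', hcos'⟩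
        have hcond' := (mem_coset_iff N M R').mp hcos'
        rcases hmem' with ⟨ν', hν'0, hν'N, rfl⟩ | rfl | ⟨l, L, hl1, hlN, hgl, hL0, hLw, rfl⟩
        · rw [eT] at hcond'
          have h1 : N ∣ a * (ν' - ν) := by
            have h2 := dvd_sub hcond' hcond
            have he : (a * ν' - b) - (a * ν - b) = a * (ν' - ν) := by ring
            rwa [he] at h2
          have hcop' : IsCoprime N a := ⟨y, x, by linear_combination hxy⟩
          have h3 : N ∣ ν' - ν := hcop'.dvd_of_dvd_mul_left h1
          have h4 := dvd_bounded h3 (by omega) (by omega)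
          have : ν' = ν := by omega
          rw [this]
        · exfalso
          rw [eS] at hcond'
          exact hNa (dvd_neg.mp hcond')
        · exfalso
          rw [eM] at hcond'
          have hgldvd : ((Int.gcd l N : ℤ)) ∣ a := by
            have h1 : (Int.gcd l N : ℤ) ∣ l := (Int.gcd_dvd_left _ _)
            have h2 : (Int.gcd l N : ℤ) ∣ N := (Int.gcd_dvd_right _ _)
            have h3 := h2.trans hcond'
            have h4 := dvd_sub (dvd_sub (h1.mul_left (a*L)) (h1.mul_left b)) h3
            have he : (a*L) * l - b * l - (a * (l * L - 1) - b * l) = a := by ring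
            rwa [he] at h4
          have h5 : (Int.gcd l N : ℤ) ∣ (Int.gcd a N : ℤ) :=
            Int.dvd_coe_gcd hgldvd (Int.gcd_dvd_right _ _)
          rw [hg1] at h5
          have h6 : Int.gcd l N ∣ 1 := by exact_mod_cast h5
          rw [Nat.dvd_one] at h6
          omega
    · -- Case M
      have hg0 : 0 < Int.gcd a N := Int.gcd_pos_iff.mpr (Or.inr hNne)
      have hg2 : 1 < Int.gcd a N := by omega
      set g : ℤ := (Int.gcd a N : ℤ) with hgdef
      have hgz : 1 < g := by rw [hgdef]; exact_mod_cast hg2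
      have hga : g ∣ a := (Int.gcd_dvd_left _ _)
      have hgN : g ∣ N := (Int.gcd_dvd_right _ _)
      have hab : IsCoprime a b := ⟨d, -c, by linear_combination hdet⟩
      have hgb : IsCoprime g b := hab.of_isCoprime_of_dvd_left hga
      obtain ⟨x, y, hxy⟩ := id hgb
      have hgc0 : IsCoprime g (-y) := ⟨x, -b, by linear_combination hxy⟩
      obtain ⟨u, v, huv, huc⟩ := lift_unit hN0 (by omega) hgN hgc0
      have hub : g ∣ u * b + 1 := by
        have h1 := dvd_add (huc.mul_right b) (⟨x, by linear_combination -hxy⟩ : g ∣ (-y) * b + 1)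
        have he : (u - -y) * b + ((-y) * b + 1) = u * b + 1 := by ring
        rwa [he] at h1
      -- the set of candidate k' values
      set TS : Set ℕ := {m : ℕ | ∃ k : ℤ, 1 < k ∧ k < N ∧ N ∣ a * (k * (m:ℤ) - 1) - b * k}
        with hTS
      -- initial element
      have hTSne : TS.Nonempty := by
        set k₀ : ℤ := (u * a) % N with hk₀
        have hk₀u : N ∣ k₀ - u * a := ⟨-((u*a) / N), by rw [hk₀, Int.emod_def]; ring⟩
        have hgk₀ : Int.gcd k₀ N = Int.gcd a N := by
          rw [gcd_congr hk₀u]; exact gcd_unit_mul a huv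
        have hk₀0 : 0 ≤ k₀ := Int.emod_nonneg _ hNne
        have hk₀N : k₀ < N := Int.emod_lt_of_pos _ hN0
        have hk₀ne0 : k₀ ≠ 0 := by
          intro h0
          rw [h0] at hgk₀
          have : Int.gcd 0 N = N.natAbs := by simp [Int.gcd]
          rw [this] at hgk₀
          have : (N.natAbs : ℤ) = N := Int.natAbs_of_nonneg hN0.le
          have hNdvda : N ∣ a := by
            rw [← this, hgk₀]; exact hga
          exact hNa hNdvda
        have hk₀ne1 : k₀ ≠ 1 := by
          intro h0
          rw [h0] at hgk₀
          have : Int.gcd 1 N = 1 := by simp [Int.gcd]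
          omega
        have hk₀1 : 1 < k₀ := by omega
        obtain ⟨e, he⟩ := hub
        have hbez := Int.gcd_eq_gcd_ab k₀ N
        set A := Int.gcdA k₀ N with hA
        set B := Int.gcdB k₀ N with hB
        have hbez' : g = k₀ * A + N * B := by
          rw [hgdef, ← hgk₀]; exact_mod_cast hbez
        have hx₀ : N ∣ k₀ * (A * e) - (u*b+1) := ⟨-B*e, by
          rw [he]; linear_combination (-e) * hbez'⟩
        set x₀ : ℤ := (A * e) % N with hx₀def
        have hx₀d : N ∣ x₀ - A * e := ⟨-((A*e) / N), by rw [hx₀def, Int.emod_def]; ring⟩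
        have hx₀0 : 0 ≤ x₀ := Int.emod_nonneg _ hNne
        have hcond₀ : N ∣ a * (k₀ * x₀ - 1) - b * k₀ := by
          have h1 : N ∣ k₀ * x₀ - (u*b+1) := by
            have h2 := dvd_add (hx₀d.mul_left k₀) hx₀
            have he2 : k₀ * (x₀ - A * e) + (k₀ * (A * e) - (u*b+1)) = k₀ * x₀ - (u*b+1) := by
              ring
            rwa [he2] at h2
          have h3 := dvd_sub (h1.mul_left a) (hk₀u.mul_left b)
          have he3 : a * (k₀ * x₀ - (u*b+1)) - b * (k₀ - u * a) = a * (k₀ * x₀ - 1) - b * k₀ := by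
            ring
          rwa [he3] at h3
        refine ⟨x₀.toNat, k₀, hk₀1, hk₀N, ?_⟩
        rw [Int.toNat_of_nonneg hx₀0]
        exact hcond₀
      obtain ⟨k, hk1, hkN, hcond⟩ := Nat.sInf_mem hTSne
      set m' : ℕ := sInf TS with hm'
      set K : ℤ := (m' : ℤ) with hK
      have hK0 : 0 ≤ K := by positivity
      -- gcd k N is a multiple of g
      have hgk : g ∣ k := by
        have h1 : g ∣ b * k := by
          have h2 := dvd_sub (hga.mul_right (k*K-1)) (hgN.trans hcond)
          have he2 : a * (k*K-1) - (a * (k * K - 1) - b * k) = b * k := by ring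
          rwa [he2] at h2
        exact hgb.dvd_of_dvd_mul_left h1
      have hgkN : 1 < Int.gcd k N := by
        have h1 : g ∣ (Int.gcd k N : ℤ) := Int.dvd_coe_gcd hgk hgN
        have h2 : Int.gcd a N ∣ Int.gcd k N := by
          rw [hgdef] at h1; exact_mod_cast h1
        have h3 : 0 < Int.gcd k N := Int.gcd_pos_iff.mpr (Or.inr hNne)
        have := Nat.le_of_dvd h3 h2
        omega
      -- window
      have hwin : m' < mu N k := by
        by_contra hge
        push_neg at hge
        obtain ⟨hμpos, hμgcd⟩ := mu_spec (N := N) k hN0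
        set μ : ℤ := (mu N k : ℤ) with hμ
        have hμ0 : 0 < μ := by rw [hμ]; exact_mod_cast hμpos
        have hgeZ : μ ≤ K := by rw [hμ, hK]; exact_mod_cast hge
        have hUgcd : Int.gcd (1 - k * μ) N = 1 := by
          have hneg : (1 - k * μ) = -(μ * k - 1) := by ring
          rw [hneg, Int.neg_gcd]
          exact hμgcd
        obtain ⟨U, V, hUVeq⟩ := Int.isCoprime_iff_gcd_eq_one.mpr hUgcd
        have hUV : N ∣ (1 - k * μ) * U - 1 := ⟨-V, by linear_combination hUVeq⟩
        set l : ℤ := (U * k) % N with hl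
        have hlU : N ∣ l - U * k := ⟨-((U*k) / N), by rw [hl, Int.emod_def]; ring⟩
        have hgl : Int.gcd l N = Int.gcd k N := by
          rw [gcd_congr hlU]
          exact gcd_unit_mul (v := 1 - k*μ) k ⟨-V, by linear_combination hUVeq⟩
        have hl0 : 0 ≤ l := Int.emod_nonneg _ hNne
        have hlN : l < N := Int.emod_lt_of_pos _ hN0
        have hgkk : (Int.gcd k N : ℤ) ≤ k := Int.le_of_dvd (by omega) (Int.gcd_dvd_left _ _)
        have hlne0 : l ≠ 0 := by
          intro h0
          rw [h0] at hgl
          have : Int.gcd 0 N = N.natAbs := by simp [Int.gcd]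
          rw [this] at hgl
          have hNn : (N.natAbs : ℤ) = N := Int.natAbs_of_nonneg hN0.le
          omega
        have hlne1 : l ≠ 1 := by
          intro h0
          rw [h0] at hgl
          have : Int.gcd 1 N = 1 := by simp [Int.gcd]
          omega
        have hl1 : 1 < l := by omega
        have hcondl : N ∣ a * (l * (K - μ) - 1) - b * l := by
          have h1 := dvd_add (dvd_add (hlU.mul_left (a*(K-μ) - b)) (hcond.mul_left U))
            (hUV.mul_left a)
          have he1 : (a*(K-μ) - b) * (l - U*k) + U * (a * (k * K - 1) - b * k)
              + a * ((1 - k * μ) * U - 1) = a * (l * (K - μ) - 1) - b * l := by ring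
          rwa [he1] at h1
        have hmem2 : (m' - mu N k : ℕ) ∈ TS := by
          refine ⟨l, hl1, hlN, ?_⟩
          have hcast : ((m' - mu N k : ℕ) : ℤ) = K - μ := by
            push_cast [hge]
            omega
          rw [hcast]
          exact hcondl
        have h4 := Nat.sInf_le hmem2
        omega
      -- conclusion of case M
      refine ⟨Mmat k K, ⟨Or.inr (Or.inr ⟨k, K, hk1, hkN, hgkN, hK0, by rw [hK]; exact_mod_cast hwin,
        rfl⟩), (mem_coset_iff N M _).mpr ?_⟩, ?_⟩
      · rw [eM]; exact hcond
      · rintro R' ⟨hmem', hcos'⟩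
        have hcond' := (mem_coset_iff N M R').mp hcos'
        rcases hmem' with ⟨ν', hν'0, hν'N, rfl⟩ | rfl | ⟨l, L, hl1, hlN, hgl, hL0, hLw, rfl⟩
        · exfalso
          rw [eT] at hcond'
          have hgbd : g ∣ b := by
            have h1 := dvd_sub (hga.mul_right ν') (hgN.trans hcond')
            have he1 : a * ν' - (a * ν' - b) = b := by ring
            rwa [he1] at h1
          have := hgb.isUnit_of_dvd' dvd_rfl hgbd
          rw [Int.isUnit_iff] at this
          omega
        · exfalso
          rw [eS] at hcond'
          exact hNa (dvd_neg.mp hcond')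
        · rw [eM] at hcond'
          obtain ⟨h1, h2⟩ := MM_unique hN0 hdet hk1 hkN hl1 hlN hK0
            (by rw [hK]; exact_mod_cast hwin) hL0 hLw hcond hcond'
          rw [h1, h2]
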